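/- The sequence of Favard constants K_n (with K_0 = 1, K_1 = 1/4) satisfies the recurrence K_{n+1} = (1/(8(n+1))) ∑_{k=0}^n K_k K_{n-k} for all n ≥ 1. -/

import Mathlib

open scoped BigOperators

/-- The Euler numbers (generating function `sech`): `E 0 = 1`, odd-index ones vanish,
and the even-index ones satisfy the standard recurrence coming from `cosh t · sech t = 1`. -/
def eulerNumber : ℕ → ℚ
  | 0 => 1
  | n + 1 =>
    if Odd (n + 1) then 0
    else -∑ k : Fin (n + 1),
      if Even (k : ℕ) then ((n + 1).choose k : ℚ) * eulerNumber k else 0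


open PowerSeries Complex Finset

noncomputable section

lemma euler_odd {m : ℕ} (h : Odd m) : eulerNumber m = 0 := by
  cases m with
  | zero => simp at h
  | succ n => rw [eulerNumber, if_pos h]

lemma euler_rec {m : ℕ} (h : Even m) (h0 : 0 < m) :
    ∑ i ∈ range (m+1), (if Even i then (m.choose i : ℚ) * eulerNumber i else 0) = 0 := by
  obtain ⟨n, rfl⟩ : ∃ n, m = n + 1 := ⟨m - 1, by omega⟩
  have hne : ¬ Odd (n+1) := by simpa [Nat.not_odd_iff_even] using h
  have hdef : eulerNumber (n+1) =
      -∑ k : Fin (n + 1), (if Even (k : ℕ) then ((n + 1).choose k : ℚ) * eulerNumber k else 0) := by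
    conv_lhs => rw [eulerNumber]
    rw [if_neg hne]
  rw [Fin.sum_univ_eq_sum_range
    (fun k => if Even k then ((n + 1).choose k : ℚ) * eulerNumber k else 0) (n+1)] at hdef
  rw [Finset.sum_range_succ, if_pos h, Nat.choose_self, hdef]
  push_cast
  ring

def Eu : ℚ⟦X⟧ := mk fun n => eulerNumber n / (4 ^ n * n.factorial)
def Ch : ℚ⟦X⟧ := mk fun n => if Even n then 1 / (4 ^ n * n.factorial) else 0

lemma EuCh : Eu * Ch = 1 := by
  ext n
  rw [coeff_mul, Finset.Nat.sum_antidiagonal_eq_sum_range_succ_mk]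
  simp only [Eu, Ch, coeff_mk, coeff_one]
  rcases Nat.eq_zero_or_pos n with rfl | hn
  · norm_num [eulerNumber]
  rw [if_neg hn.ne']
  by_cases hpar : Even n
  · have key : ∀ i ∈ range (n+1),
        eulerNumber i / (4 ^ i * i.factorial) *
          (if Even (n - i) then (1:ℚ) / (4 ^ (n-i) * (n-i).factorial) else 0)
        = (if Even i then (n.choose i : ℚ) * eulerNumber i else 0) * (1 / (4^n * n.factorial)) := by
      intro i hi
      rw [Finset.mem_range] at hi
      have hin : i ≤ n := by omega
      have hiff : Even (n - i) ↔ Even i := by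
        rw [Nat.even_sub hin]
        exact ⟨fun hx => hx.mp hpar, fun hx => ⟨fun _ => hx, fun _ => hpar⟩⟩
      by_cases hie : Even i
      · rw [if_pos (hiff.mpr hie), if_pos hie]
        have hfac : (n.factorial : ℚ) = (n.choose i : ℚ) * i.factorial * (n-i).factorial := by
          rw [← Nat.choose_mul_factorial_mul_factorial hin]
          push_cast
          ring
        have h4 : (4:ℚ)^n = 4^i * 4^(n-i) := by
          rw [← pow_add]
          congr 1
          omega
        have hi0 : (i.factorial : ℚ) ≠ 0 := by positivity
        have hni0 : ((n-i).factorial : ℚ) ≠ 0 := by positivity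
        have hc0 : (n.choose i : ℚ) ≠ 0 := by
          simp [Nat.choose_eq_zero_iff]; omega
        rw [hfac, h4]
        field_simp
      · rw [if_neg (fun hc => hie (hiff.mp hc)), if_neg hie]
        ring
    rw [Finset.sum_congr rfl key, ← Finset.sum_mul, euler_rec hpar hn, zero_mul]
  · apply Finset.sum_eq_zero
    intro i hi
    rw [Finset.mem_range] at hi
    have hin : i ≤ n := by omega
    by_cases hie : Even i
    · have : ¬ Even (n - i) := by
        rw [Nat.even_sub hin]
        tauto
      rw [if_neg this, mul_zero]
    · have : eulerNumber i = 0 := euler_odd (Nat.not_even_iff_odd.mp hie)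
      rw [this]
      simp

abbrev phi : ℚ →+* ℂ := algebraMap ℚ ℂ
def Ee (a : ℂ) : ℂ⟦X⟧ := rescale a (exp ℂ)
lemma Ee_mul (a b : ℂ) : Ee a * Ee b = Ee (a + b) := exp_mul_exp_eq_exp_add a b
lemma Ee_zero : Ee 0 = 1 := by simp [Ee, rescale_zero]
lemma coeff_Ee (a : ℂ) (n : ℕ) : coeff n (Ee a) = a ^ n * phi (1 / n.factorial) := by
  simp [Ee, coeff_rescale, coeff_exp]
lemma phi_fact (n : ℕ) : phi (1 / (n+1).factorial) * ((n : ℂ) + 1) = phi (1 / n.factorial) := by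
  have : ((n : ℂ) + 1) = phi ((n : ℚ) + 1) := by simp
  rw [this, ← map_mul]
  congr 1
  rw [Nat.factorial_succ]
  have h3 : ((n.factorial : ℚ)) ≠ 0 := by positivity
  field_simp
  push_cast
  ring
lemma dEe (a : ℂ) : d⁄dX ℂ (Ee a) = C a * Ee a := by
  ext n
  rw [coeff_derivative, coeff_C_mul, coeff_Ee, coeff_Ee, pow_succ, mul_assoc, mul_assoc,
    phi_fact]
  ring

def Ep : ℂ⟦X⟧ := Ee (I/4)
def Em : ℂ⟦X⟧ := Ee (-I/4)
def cc : ℂ⟦X⟧ := Ep + Em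
def ss : ℂ⟦X⟧ := C I * (Em - Ep)

lemma hpm : Ep * Em = 1 := by
  rw [Ep, Em, Ee_mul, show I/4 + -I/4 = 0 by ring, Ee_zero]
lemma hEp0 : Ep ≠ 0 := fun h => by simpa [h] using hpm
lemma hi2 : (C I) * (C I) = -1 := by
  rw [← map_mul, I_mul_I, map_neg, map_one]
lemma hi0 : (C I) ≠ 0 := fun h => by
  have := congrArg (constantCoeff) h
  simp [I_ne_zero] at this

lemma hPyth : cc * cc + ss * ss = 4 := by
  have h4 : (4 : ℂ⟦X⟧) = 4 * (Ep * Em) := by rw [hpm]; ring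
  rw [h4, cc, ss]
  linear_combination (Em - Ep)*(Em - Ep)*hi2

-- Bernoulli side
def R2 : ℂ⟦X⟧ := rescale (I/2) (bernoulliPowerSeries ℂ)
def R1 : ℂ⟦X⟧ := rescale I (bernoulliPowerSeries ℂ)
def Phi2 : ℂ⟦X⟧ := 4 * R2 + C I * X
def Phi1 : ℂ⟦X⟧ := 4 * R1 + 2 * (C I) * X

lemma hr2 : 2 * (R2 * (Ep * Ep - 1)) = C I * X := by
  have h := congrArg (rescale (I/2)) (bernoulliPowerSeries_mul_exp_sub_one ℂ)
  rw [map_mul, map_sub, map_one, rescale_X] at h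
  have hE : rescale (I/2) (exp ℂ) = Ep * Ep := by
    rw [Ep, Ee_mul]
    show rescale (I/2) (exp ℂ) = rescale (I/4 + I/4) (exp ℂ)
    congr 1
    ring
  rw [hE] at h
  calc 2 * (R2 * (Ep * Ep - 1)) = C 2 * (C (I/2) * X) := by
        rw [← h, R2, (map_ofNat C 2).symm]
    _ = C I * X := by rw [← mul_assoc, ← map_mul]; congr 2; ring

lemma hr1 : R1 * (Ep * Ep * (Ep * Ep) - 1) = C I * X := by
  have h := congrArg (rescale I) (bernoulliPowerSeries_mul_exp_sub_one ℂ)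
  rw [map_mul, map_sub, map_one, rescale_X] at h
  have hE : rescale I (exp ℂ) = Ep * Ep * (Ep * Ep) := by
    rw [Ep, Ee_mul, Ee_mul]
    show rescale I (exp ℂ) = rescale (I/4 + I/4 + (I/4 + I/4)) (exp ℂ)
    congr 1
    ring
  rw [hE] at h
  exact h

lemma P2c : Phi2 * ss = X * cc := by
  have key : (C I * Ep) * (Phi2 * ss) = (C I * Ep) * (X * cc) := by
    rw [Phi2, ss, cc]
    linear_combination 2*hr2 + (-(4*R2) - 2*(C I)*X) * hpm +
      (4*R2*Ep*(Em-Ep) + (C I)*X*Ep*(Em-Ep)) * hi2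
  exact mul_left_cancel₀ (mul_ne_zero hi0 hEp0) key

lemma P1c : Phi1 * (ss * cc) = X * (cc * cc - ss * ss) := by
  have key : (C I * (Ep * Ep)) * (Phi1 * (ss * cc)) =
      (C I * (Ep * Ep)) * (X * (cc * cc - ss * ss)) := by
    rw [Phi1, ss, cc]
    linear_combination 4*hr1 + (-(4*(C I)*X*(Ep*Em+1)) - 4*R1*(Ep*Em+1)) * hpm +
      (4*R1*Ep*Ep*(Em*Em-Ep*Ep) + 2*(C I)*X*Ep*Ep*(Em*Em-Ep*Ep) +
        (C I)*Ep*Ep*X*(Em-Ep)*(Em-Ep)) * hi2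
  exact mul_left_cancel₀ (mul_ne_zero hi0 (mul_ne_zero hEp0 hEp0)) key

lemma coeff_one_ss : coeff 1 ss = 1/2 := by
  rw [ss, coeff_C_mul, map_sub, Em, Ep, coeff_Ee, coeff_Ee]
  simp only [pow_one, Nat.factorial_one, Nat.cast_one, div_one, map_one, mul_one]
  linear_combination (-1/2 : ℂ) * I_mul_I

lemma ss_ne : ss ≠ 0 := by
  intro h
  have h2 := coeff_one_ss
  rw [h] at h2
  norm_num at h2

lemma T1 : (Phi2 - Phi1) * cc = X * ss := by
  have key : ((Phi2 - Phi1) * cc) * ss = (X * ss) * ss := by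
    linear_combination cc * P2c - P1c
  exact mul_right_cancel₀ ss_ne key
end
noncomputable section
-- derivatives
lemma dEp : (4:ℂ⟦X⟧) * (d⁄dX ℂ Ep) = C I * Ep := by
  rw [Ep, dEe]
  rw [show C I = C 4 * C (I/4) by rw [← map_mul]; congr 1; ring]
  rw [show (C (4:ℂ)) = (4:ℂ⟦X⟧) by rw [map_ofNat]]
  ring
lemma dEm : (4:ℂ⟦X⟧) * (d⁄dX ℂ Em) = -(C I * Em) := by
  rw [Em, dEe]
  rw [show -(C I * Ee (-I/4)) = (C 4 * C (-I/4)) * Ee (-I/4) by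
    rw [← map_mul]; rw [show (4:ℂ) * (-I/4) = -I by ring, map_neg]; ring]
  rw [show (C (4:ℂ)) = (4:ℂ⟦X⟧) by rw [map_ofNat]]
  ring
lemma dcc : (4:ℂ⟦X⟧) * (d⁄dX ℂ cc) = -ss := by
  rw [cc, map_add, mul_add, dEp, dEm, ss]
  ring
lemma dss : (4:ℂ⟦X⟧) * (d⁄dX ℂ ss) = cc := by
  rw [ss]
  have : d⁄dX ℂ (C I * (Em - Ep)) = C I * d⁄dX ℂ (Em - Ep) := by
    rw [Derivation.leibniz, derivative_C, smul_zero, add_zero, smul_eq_mul]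
  rw [this, map_sub, cc]
  linear_combination (C I)*dEm - (C I)*dEp - (Ep+Em)*hi2
end

noncomputable section
-- the even (secant) part
def Vev : ℂ⟦X⟧ := rescale I (PowerSeries.map phi Eu)

lemma phi_inv4 (n : ℕ) : (I:ℂ)^n * phi (1/(4^n * n.factorial)) = (I/4)^n * phi (1/n.factorial) := by
  have h1 : (1:ℚ)/(4^n*n.factorial) = (1/4)^n * (1/n.factorial) := by
    rw [one_div_pow, div_mul_div_comm, one_mul]
  rw [h1, map_mul, map_pow]
  have h2 : phi ((1:ℚ)/4) = 1/4 := by norm_num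
  rw [h2, div_pow, div_pow]
  ring

lemma hChc : (2:ℂ⟦X⟧) * rescale I (PowerSeries.map phi Ch) = cc := by
  ext n
  rw [show (2:ℂ⟦X⟧) = C 2 from (map_ofNat _ 2).symm, coeff_C_mul, coeff_rescale, coeff_map,
    cc, map_add, Ep, Em, coeff_Ee, coeff_Ee, Ch, coeff_mk]
  have hIn : (I:ℂ)^n ≠ 0 := pow_ne_zero _ I_ne_zero
  by_cases h : Even n
  · rw [if_pos h]
    have hneg : ((-I/4):ℂ)^n = ((I/4):ℂ)^n := by
      rw [show ((-I/4):ℂ) = -(I/4) by ring, h.neg_pow]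
    rw [hneg]
    linear_combination 2 * phi_inv4 n
  · rw [if_neg h]
    have hneg : ((-I/4):ℂ)^n = -((I/4):ℂ)^n := by
      rw [show ((-I/4):ℂ) = -(I/4) by ring, (Nat.not_even_iff_odd.mp h).neg_pow]
    rw [hneg, map_zero]
    ring

lemma hVev : Vev * cc = 2 := by
  have h := congrArg (rescale I ∘ PowerSeries.map phi) EuCh
  simp only [Function.comp_apply, map_mul, map_one] at h
  calc Vev * cc = Vev * ((2:ℂ⟦X⟧) * rescale I (PowerSeries.map phi Ch)) := by rw [hChc]
    _ = 2 * (rescale I (PowerSeries.map phi Eu) * rescale I (PowerSeries.map phi Ch)) := by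
        rw [Vev]; ring
    _ = 2 := by rw [h, mul_one]
end

noncomputable section
def W : ℂ⟦X⟧ := Phi2 - Phi1
def Vod : ℂ⟦X⟧ := mk fun n => coeff (n+1) W

lemma coeff_bps (n : ℕ) : coeff n (bernoulliPowerSeries ℂ) = phi (bernoulli n / n.factorial) := by
  rw [bernoulliPowerSeries, coeff_mk]

lemma coeff_W (n : ℕ) : coeff n W =
    4 * ((I/2)^n - I^n) * phi (bernoulli n / n.factorial) + (if n = 1 then -I else 0) := by
  rw [W, Phi2, Phi1, map_sub, map_add, map_add]
  rw [show (4:ℂ⟦X⟧) * R2 = C 4 * R2 from by rw [map_ofNat], coeff_C_mul,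
    show (4:ℂ⟦X⟧) * R1 = C 4 * R1 from by rw [map_ofNat],
    show (2:ℂ⟦X⟧) * C I * X = C (2*I) * X from by rw [map_mul, map_ofNat], coeff_C_mul,
    coeff_C_mul, coeff_C_mul, R2, R1, coeff_rescale, coeff_rescale, coeff_bps, coeff_X]
  by_cases h : n = 1
  · subst h; simp; ring
  · rw [if_neg h, if_neg h]; ring

lemma hXVod : X * Vod = W := by
  ext n
  cases n with
  | zero =>
    rw [coeff_zero_X_mul, coeff_W]
    norm_num [bernoulli_zero]
  | succ m => rw [coeff_succ_X_mul, Vod, coeff_mk]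

lemma hVod : Vod * cc = ss := by
  have key : X * (Vod * cc) = X * ss := by
    rw [← mul_assoc, hXVod, W, T1]
  exact mul_left_cancel₀ X_ne_zero key

def V : ℂ⟦X⟧ := Vev + Vod

lemma hVc : V * cc = 2 + ss := by rw [V, add_mul, hVev, hVod]

lemma cc_ne : cc ≠ 0 := by
  intro h
  have h2 := congrArg (coeff 0) h
  rw [cc, map_add, Ep, Em, coeff_Ee, coeff_Ee] at h2
  norm_num [Nat.factorial] at h2

lemma hODE : (8:ℂ⟦X⟧) * d⁄dX ℂ V = 1 + V * V := by
  have hd := congrArg (d⁄dX ℂ) hVc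
  rw [Derivation.leibniz, smul_eq_mul, smul_eq_mul, map_add,
    show ((2:ℂ⟦X⟧)) = C 2 from (map_ofNat _ 2).symm, derivative_C, zero_add] at hd
  have h1 : (4:ℂ⟦X⟧) * (cc * d⁄dX ℂ V) = cc + V * ss := by
    have h4 : (4:ℂ⟦X⟧) * (V * d⁄dX ℂ cc + cc * d⁄dX ℂ V) = 4 * d⁄dX ℂ ss := by rw [hd]
    rw [dss] at h4
    linear_combination h4 - V * dcc
  have key : ((8:ℂ⟦X⟧) * d⁄dX ℂ V) * (cc * cc) = (1 + V * V) * (cc * cc) := by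
    linear_combination 2*cc*h1 + (-(V*cc) + ss - 2)*hVc + hPyth
  exact mul_right_cancel₀ (mul_ne_zero cc_ne cc_ne) key
end

noncomputable section
lemma hrec (n : ℕ) : 8 * ((n:ℂ) + 1) * coeff (n+1) V =
    (if n = 0 then 1 else 0) + ∑ k ∈ range (n+1), coeff k V * coeff (n-k) V := by
  have h := congrArg (coeff n) hODE
  rw [show (8:ℂ⟦X⟧) * d⁄dX ℂ V = C 8 * d⁄dX ℂ V from by rw [map_ofNat]] at h
  rw [coeff_C_mul, coeff_derivative, map_add, coeff_one, coeff_mul,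
    Finset.Nat.sum_antidiagonal_eq_sum_range_succ_mk] at h
  rw [← h]
  push_cast
  ring

def qV (n : ℕ) : ℚ :=
  if Odd n then (-1)^((n+1)/2+1) * bernoulli (n+1) * (2^(n+1) - 1) / (2^(n-1) * (n+1).factorial)
  else (-1)^(n/2) * eulerNumber n / (4^n * n.factorial)

lemma I_pow_even (k : ℕ) : (I:ℂ)^(2*k) = phi ((-1)^k) := by
  rw [pow_mul, I_sq]
  simp

lemma bern_odd {m : ℕ} (h : Odd m) (h1 : 1 < m) : bernoulli m = 0 := by
  rw [bernoulli, bernoulli'_eq_zero_of_odd h h1, mul_zero]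

lemma coeff_Vev (n : ℕ) : coeff n Vev = I^n * phi (eulerNumber n / (4^n * n.factorial)) := by
  rw [Vev, coeff_rescale, coeff_map, Eu, coeff_mk]

lemma hq (n : ℕ) : coeff n V = phi (qV n) := by
  rw [V, map_add, coeff_Vev, Vod, coeff_mk, coeff_W, qV]
  by_cases h : Odd n
  · rw [if_pos h]
    obtain ⟨m, rfl⟩ : ∃ m, n = m + 1 := ⟨n-1, by have h2 := Nat.odd_iff.mp h; omega⟩
    obtain ⟨j, hj⟩ := h
    have hn1 : m + 1 + 1 = 2*(j+1) := by omega
    rw [euler_odd ⟨j, hj⟩, if_neg (by omega : ¬ (m+1+1 = 1))]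
    simp only [zero_div, map_zero, mul_zero, zero_add, add_zero]
    have h2 : ((I:ℂ)/2)^(m+1+1) = phi ((-1)^(j+1) / 2^(m+1+1)) := by
      rw [div_pow, hn1, I_pow_even, map_div₀, map_pow]
      norm_num
    have h3 : (I:ℂ)^(m+1+1) = phi ((-1)^(j+1)) := by rw [hn1, I_pow_even]
    rw [h2, h3, show ((4:ℂ)) = phi 4 from by norm_num, ← map_sub, ← map_mul, ← map_mul]
    congr 1
    rw [show (m+1+1)/2 = j+1 from by omega, show m+1-1 = m from rfl]
    have hf : (((m+1+1)).factorial : ℚ) ≠ 0 := by positivity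
    have h2n : (2:ℚ)^m ≠ 0 := by positivity
    have h2n1 : (2:ℚ)^(m+1+1) ≠ 0 := by positivity
    field_simp
    ring
  · have he : Even n := Nat.not_odd_iff_even.mp h
    rw [if_neg h]
    obtain ⟨j, hj⟩ := he
    have hn2 : n = 2*j := by omega
    have hbz : 4 * ((I/2)^(n+1) - I^(n+1)) * phi (bernoulli (n+1) / (n+1).factorial) +
        (if n + 1 = 1 then -I else 0) = 0 := by
      rcases Nat.eq_zero_or_pos n with rfl | hn
      · have hb : phi (bernoulli (0+1) / ((0+1).factorial)) = -(1/2) := by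
          rw [bernoulli_one]
          norm_num
        rw [hb, if_pos rfl]
        ring
      · rw [bern_odd (Nat.odd_iff.mpr (by omega)) (by omega), if_neg (by omega : ¬ (n+1=1))]
        simp
    have hIn : (I:ℂ)^n = phi ((-1)^j) := by rw [show n = 2*j from hn2, I_pow_even]
    rw [hbz, add_zero, hIn, ← map_mul]
    congr 1
    rw [show n/2 = j from by omega]
    ring

lemma phi_inj : Function.Injective phi := (algebraMap ℚ ℂ).injective

lemma hrecQ (n : ℕ) : 8 * ((n:ℚ) + 1) * qV (n+1) =
    (if n = 0 then 1 else 0) + ∑ k ∈ range (n+1), qV k * qV (n-k) := by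
  apply phi_inj
  have hL : phi (8 * ((n:ℚ) + 1) * qV (n+1)) = 8 * ((n:ℂ)+1) * coeff (n+1) V := by
    rw [map_mul, map_mul, ← hq, show phi 8 = 8 from by norm_num,
      show phi ((n:ℚ)+1) = (n:ℂ)+1 from by push_cast; simp]
  have hR : phi ((if n = 0 then 1 else 0) + ∑ k ∈ range (n+1), qV k * qV (n-k)) =
      (if n = 0 then 1 else 0) + ∑ k ∈ range (n+1), coeff k V * coeff (n-k) V := by
    rw [map_add, map_sum, apply_ite phi, map_one, map_zero]
    congr 1
    apply Finset.sum_congr rfl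
    intro k _
    rw [map_mul, hq, hq]
  rw [hL, hR, hrec n]
end

/-- The Favard constants `K n`. -/
def favardK (n : ℕ) : ℚ :=
  if Odd n then
    ((2 ^ (n + 1) - 1) * |bernoulli (n + 1)|) / (2 ^ (n - 1) * Nat.factorial (n + 1))
  else |eulerNumber n| / (4 ^ n * Nat.factorial n)


noncomputable section

lemma qV_pos : ∀ n, 0 < qV n := by
  intro n
  induction n using Nat.strong_induction_on with
  | _ n ih =>
    match n with
    | 0 => norm_num [qV, eulerNumber]
    | (m+1) =>
      have h := hrecQ m
      have hsum : 0 < (if m = 0 then (1:ℚ) else 0) + ∑ k ∈ range (m+1), qV k * qV (m-k) := by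
        have h1 : 0 < ∑ k ∈ range (m+1), qV k * qV (m-k) := by
          apply Finset.sum_pos
          · intro k hk
            rw [Finset.mem_range] at hk
            exact mul_pos (ih k (by omega)) (ih (m-k) (by omega))
          · exact ⟨0, Finset.mem_range.mpr (by omega)⟩
        positivity
      nlinarith [h, hsum, Nat.cast_nonneg (α := ℚ) m]

lemma favardK_eq (n : ℕ) : favardK n = qV n := by
  have hp := qV_pos n
  rw [qV] at hp
  rw [favardK, qV]
  by_cases h : Odd n
  · rw [if_pos h] at hp
    rw [if_pos h, if_pos h]
    set s : ℚ := (-1)^((n+1)/2+1) with hs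
    set b : ℚ := bernoulli (n+1) with hb
    have hc : (0:ℚ) < (2^(n+1) - 1) / (2^(n-1) * (n+1).factorial) := by
      have : (1:ℚ) < 2^(n+1) := by
        have : (2:ℚ)^0 < 2^(n+1) := by
          apply pow_lt_pow_right₀ (by norm_num) (by omega)
        simpa using this
      have h2 : (0:ℚ) < 2^(n-1) * (n+1).factorial := by positivity
      apply div_pos (by linarith) h2
    have hsb : 0 < s * b := by
      by_contra hc2
      push_neg at hc2
      have : s * b * ((2^(n+1) - 1) / (2^(n-1) * (n+1).factorial)) ≤ 0 :=
        mul_nonpos_of_nonpos_of_nonneg hc2 (le_of_lt hc)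
      have heq : s * b * ((2^(n+1) - 1) / (2^(n-1) * (n+1).factorial))
          = s * b * (2^(n+1) - 1) / (2^(n-1) * (n+1).factorial) := by ring
      rw [heq] at this
      linarith [hp]
    have habs : |b| = s * b := by
      have h1 : |s * b| = s * b := abs_of_pos hsb
      have h2 : |s| = 1 := by
        rw [hs, _root_.abs_pow, abs_neg, abs_one, one_pow]
      rw [abs_mul, h2, one_mul] at h1
      exact h1
    rw [habs]
    ring
  · rw [if_neg h] at hp
    rw [if_neg h, if_neg h]
    set s : ℚ := (-1)^(n/2) with hs
    set e : ℚ := eulerNumber n with he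
    have hc : (0:ℚ) < 1 / ((4:ℚ)^n * n.factorial) := by positivity
    have hsb : 0 < s * e := by
      by_contra hc2
      push_neg at hc2
      have : s * e * (1 / ((4:ℚ)^n * n.factorial)) ≤ 0 :=
        mul_nonpos_of_nonpos_of_nonneg hc2 (le_of_lt hc)
      have heq : s * e * (1 / ((4:ℚ)^n * n.factorial)) = s * e / (4^n * n.factorial) := by ring
      rw [heq] at this
      linarith [hp]
    have habs : |e| = s * e := by
      have h1 : |s * e| = s * e := abs_of_pos hsb
      have h2 : |s| = 1 := by rw [hs, _root_.abs_pow, abs_neg, abs_one, one_pow]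
      rw [abs_mul, h2, one_mul] at h1
      exact h1
    rw [habs]


end

theorem favard_recurrence (n : ℕ) (hn : 1 ≤ n) :
    favardK (n + 1) =
      (1 / (8 * (n + 1))) * ∑ k ∈ Finset.range (n + 1), favardK k * favardK (n - k) := by
  have h := hrecQ n
  rw [if_neg (by omega : ¬ n = 0), zero_add] at h
  have hsum : ∑ k ∈ Finset.range (n + 1), favardK k * favardK (n - k)
      = ∑ k ∈ range (n+1), qV k * qV (n-k) := by
    apply Finset.sum_congr rfl
    intro k _
    rw [favardK_eq, favardK_eq]
  rw [hsum, favardK_eq, ← h]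
  have h8 : ((8:ℚ) * ((n:ℚ)+1)) ≠ 0 := by positivity
  field_simp
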